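/- Let T be an infinite rooted tree. The function g defined by g(o) = 0 and g(v) = ℓ_m(|v|) for v ≠ o belongs to L^(m) for every m ≥ 0; specifically ‖g‖_0 = 1, and for m ≥ 1 one has ‖g‖_m ≤ 2·∏_{j=1}^{m} ℓ_j(2). -/

import Mathlib

open Real Filter

/-- Iterated logarithm: ℓ₀(x) = x, ℓ_{j+1}(x) = 1 + log ℓ_j(x). -/
noncomputable def ell : ℕ → ℝ → ℝ
  | 0, x => x
  | j + 1, x => 1 + Real.log (ell j x)

/-- Λ_k(x) = ∏_{j=0}^{k-1} ℓ_j(x). -/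
noncomputable def Lam (k : ℕ) (x : ℝ) : ℝ := ∏ j ∈ Finset.range k, ell j x

/-- Discrete derivative of f on a rooted tree given by a parent map:
`f v - f (parent v)` (automatically 0 at the root since `parent o = o`). -/
def Der {V : Type*} (parent : V → V) (f : V → ℂ) (v : V) : ℂ := f v - f (parent v)

/-- The set of values |f'(v)|·Λ_k(|v|) over v ≠ o; f ∈ L^(k) iff this set is bounded above. -/
def lipSet {V : Type*} [DecidableEq V] (o : V) (parent : V → V) (depth : V → ℕ) (k : ℕ) (f : V → ℂ) : Set ℝ :=
  {r | ∃ v, v ≠ o ∧ r = ‖Der parent f v‖ * Lam k (depth v)}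

/-- ‖f‖_k = |f(o)| + sup_{v ≠ o} |f'(v)|·Λ_k(|v|). -/
noncomputable def lipNorm {V : Type*} [DecidableEq V] (o : V) (parent : V → V) (depth : V → ℕ) (k : ℕ)
    (f : V → ℂ) : ℝ :=
  ‖f o‖ + sSup (lipSet o parent depth k f)

lemma ell_one_le : ∀ (j : ℕ) {x : ℝ}, 1 ≤ x → 1 ≤ ell j x
  | 0, x, hx => hx
  | j+1, x, hx => by
      have h := ell_one_le j hx
      have : 0 ≤ Real.log (ell j x) := Real.log_nonneg h
      simp only [ell]; linarith

lemma ell_at_one : ∀ j : ℕ, ell j 1 = 1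
  | 0 => rfl
  | j+1 => by simp [ell, ell_at_one j]

lemma ell_mono : ∀ (j : ℕ) {a b : ℝ}, 1 ≤ a → a ≤ b → ell j a ≤ ell j b
  | 0, a, b, _, hab => hab
  | j+1, a, b, ha, hab => by
      have h1 := ell_one_le j ha
      have := Real.log_le_log (by linarith) (ell_mono j ha hab)
      simp only [ell]; linarith

lemma Lam_one_le (k : ℕ) {x : ℝ} (hx : 1 ≤ x) : 1 ≤ Lam k x := by
  rw [Lam]
  have := Finset.prod_le_prod (s := Finset.range k) (f := fun _ => (1:ℝ))
    (g := fun j => ell j x) (fun _ _ => zero_le_one) (fun j _ => ell_one_le j hx)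
  simpa using this

lemma Lam_pos (k : ℕ) {x : ℝ} (hx : 1 ≤ x) : 0 < Lam k x :=
  lt_of_lt_of_le one_pos (Lam_one_le k hx)

lemma Lam_at_one (k : ℕ) : Lam k 1 = 1 := by
  simp [Lam, ell_at_one]

lemma Lam_mono (k : ℕ) {a b : ℝ} (ha : 1 ≤ a) (hab : a ≤ b) : Lam k a ≤ Lam k b :=
  Finset.prod_le_prod (fun j _ => le_trans zero_le_one (ell_one_le j ha))
    (fun j _ => ell_mono j ha hab)

lemma ell_contAt : ∀ (j : ℕ) {x : ℝ}, 1 ≤ x → ContinuousAt (ell j) x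
  | 0, x, _ => by
      have : ell 0 = fun y : ℝ => y := rfl
      rw [this]; exact continuousAt_id
  | j+1, x, hx => by
      have h1 : 1 ≤ ell j x := ell_one_le j hx
      have : ell (j+1) = fun y => 1 + Real.log (ell j y) := rfl
      rw [this]
      exact continuousAt_const.add ((Real.continuousAt_log (by linarith)).comp (ell_contAt j hx))

lemma ell_hasDeriv : ∀ (j : ℕ) {x : ℝ}, 1 < x → HasDerivAt (ell j) (1 / Lam j x) x
  | 0, x, _ => by
      have h : Lam 0 x = 1 := by simp [Lam]
      have : ell 0 = fun y : ℝ => y := rfl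
      rw [this, h]; simpa using hasDerivAt_id' x
  | j+1, x, hx => by
      have h1 : 1 ≤ ell j x := ell_one_le j hx.le
      have hL : 0 < Lam j x := Lam_pos j hx.le
      have h2 : HasDerivAt (fun y => Real.log (ell j y)) ((ell j x)⁻¹ * (1 / Lam j x)) x :=
        (Real.hasDerivAt_log (by linarith)).comp x (ell_hasDeriv j hx)
      have h3 := h2.const_add 1
      have he : ell (j+1) = fun y => 1 + Real.log (ell j y) := rfl
      rw [he]
      refine h3.congr_deriv ?_
      rw [show Lam (j+1) x = Lam j x * ell j x from Finset.prod_range_succ _ _]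
      field_simp

lemma ell_submul : ∀ (j : ℕ) {x : ℝ}, 2 ≤ x → ell j x ≤ ell j 2 * ell j (x - 1)
  | 0, x, hx => by simp only [ell]; linarith
  | j+1, x, hx => by
      have ih := ell_submul j hx
      have h1 : (1:ℝ) ≤ ell j (x-1) := ell_one_le j (by linarith)
      have h2 : (1:ℝ) ≤ ell j 2 := ell_one_le j (by norm_num)
      have hx1 : (1:ℝ) ≤ ell j x := ell_one_le j (by linarith)
      have hlog : Real.log (ell j x) ≤ Real.log (ell j 2 * ell j (x-1)) :=
        Real.log_le_log (by linarith) ih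
      rw [Real.log_mul (by linarith) (by linarith)] at hlog
      have la : 0 ≤ Real.log (ell j 2) := Real.log_nonneg h2
      have lb : 0 ≤ Real.log (ell j (x-1)) := Real.log_nonneg h1
      simp only [ell]
      nlinarith

lemma ell_diff (m : ℕ) {x : ℝ} (hx : 2 ≤ x) :
    0 ≤ ell m x - ell m (x-1) ∧ ell m x - ell m (x-1) ≤ 1 / Lam m (x-1) := by
  have hab : x - 1 < x := by linarith
  have hcont : ContinuousOn (ell m) (Set.Icc (x-1) x) := fun y hy =>
    (ell_contAt m (by have := hy.1; linarith)).continuousWithinAt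
  have hderiv : ∀ y ∈ Set.Ioo (x-1) x, HasDerivAt (ell m) ((fun z => 1 / Lam m z) y) y :=
    fun y hy => ell_hasDeriv m (by have := hy.1; linarith)
  obtain ⟨c, hc, hceq⟩ := exists_hasDerivAt_eq_slope (ell m) _ hab hcont hderiv
  have hden : x - (x-1) = 1 := by ring
  rw [hden, div_one] at hceq
  have h1 : 1 ≤ Lam m (x-1) := Lam_one_le m (by linarith)
  have h2 : Lam m (x-1) ≤ Lam m c := Lam_mono m (by linarith) hc.1.le
  constructor
  · rw [← hceq]
    have h3 : 0 < Lam m c := lt_of_lt_of_le one_pos (by linarith)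
    positivity
  · rw [← hceq]
    exact one_div_le_one_div_of_le (by linarith) h2

lemma prod_range_le (m : ℕ) :
    ∏ j ∈ Finset.range m, ell j 2 ≤ 2 * ∏ j ∈ Finset.Icc 1 m, ell j 2 := by
  have h1 : ∏ j ∈ Finset.range m, ell j 2 ≤ ∏ j ∈ Finset.range (m+1), ell j 2 := by
    rw [Finset.prod_range_succ]
    have h2 : (1:ℝ) ≤ ell m 2 := ell_one_le m (by norm_num)
    have hP : (1:ℝ) ≤ ∏ j ∈ Finset.range m, ell j 2 := by
      simpa using Finset.prod_le_prod (s := Finset.range m) (f := fun _ => (1:ℝ))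
        (g := fun j => ell j 2) (fun _ _ => zero_le_one) (fun j _ => ell_one_le j (by norm_num))
    nlinarith
  refine h1.trans_eq ?_
  rw [Finset.prod_range_succ']
  have : ∏ j ∈ Finset.Icc 1 m, ell j 2 = ∏ j ∈ Finset.range m, ell (j+1) 2 := by
    rw [show Finset.Icc 1 m = Finset.Ico 1 (m+1) by rfl, Finset.prod_Ico_eq_prod_range]
    simp [add_comm]
  rw [this]
  simp only [ell]
  ring

lemma Lam_ratio (m : ℕ) {x : ℝ} (hx : 2 ≤ x) :
    Lam m x ≤ (2 * ∏ j ∈ Finset.Icc 1 m, ell j 2) * Lam m (x-1) := by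
  have step : Lam m x ≤ (∏ j ∈ Finset.range m, ell j 2) * Lam m (x-1) := by
    rw [Lam, Lam, ← Finset.prod_mul_distrib]
    exact Finset.prod_le_prod
      (fun j _ => le_trans zero_le_one (ell_one_le j (by linarith)))
      (fun j _ => ell_submul j hx)
  refine step.trans (mul_le_mul_of_nonneg_right (prod_range_le m) ?_)
  exact le_trans zero_le_one (Lam_one_le m (by linarith))

lemma one_le_K (m : ℕ) : 1 ≤ 2 * ∏ j ∈ Finset.Icc 1 m, ell j 2 := by
  have := Finset.prod_le_prod (s := Finset.Icc 1 m) (f := fun _ => (1:ℝ))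
    (g := fun j => ell j 2) (fun _ _ => zero_le_one) (fun j _ => ell_one_le j (by norm_num))
  simp only [Finset.prod_const_one] at this
  linarith

lemma ell_zero (x : ℝ) : ell 0 x = x := rfl

section Main
variable {V : Type*} [DecidableEq V] (o : V) (parent : V → V) (depth : V → ℕ)

lemma key_bound (hdepth0 : depth o = 0)
    (hdepth : ∀ v, v ≠ o → depth v = depth (parent v) + 1)
    (k : ℕ) (v : V) (hv : v ≠ o) :
    ‖Der parent (fun v => if v = o then 0 else (ell k (depth v) : ℂ)) v‖ *
      Lam k (depth v) ≤ 2 * ∏ j ∈ Finset.Icc 1 k, ell j 2 := by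
  have hdv := hdepth v hv
  simp only [Der, if_neg hv]
  by_cases hp : parent v = o
  · have hd1 : depth v = 1 := by rw [hdv, hp, hdepth0]
    rw [hp, if_pos rfl, hd1]
    norm_num [ell_at_one, Lam_at_one]
    exact one_le_K k
  · set t := depth (parent v) with htdef
    have ht1 : 1 ≤ t := by rw [htdef, hdepth (parent v) hp]; omega
    have ht1' : (1:ℝ) ≤ (t:ℝ) := by exact_mod_cast ht1
    rw [if_neg hp, hdv]
    have hcast : ((t + 1 : ℕ) : ℝ) = (t:ℝ) + 1 := by push_cast; ring
    rw [hcast]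
    set x := (t:ℝ) + 1 with hxdef
    have hx : 2 ≤ x := by linarith
    have hx1 : x - 1 = (t:ℝ) := by ring
    obtain ⟨hd0, hd1⟩ := ell_diff k hx
    rw [hx1] at hd0 hd1
    have habs : ‖(ell k x : ℂ) - (ell k (t:ℝ) : ℂ)‖ = ell k x - ell k (t:ℝ) := by
      rw [← Complex.ofReal_sub, Complex.norm_real, Real.norm_of_nonneg hd0]
    rw [habs]
    have hLt : 0 < Lam k (t:ℝ) := Lam_pos k ht1'
    have h5 : Lam k x ≤ (2 * ∏ j ∈ Finset.Icc 1 k, ell j 2) * Lam k (t:ℝ) := by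
      have := Lam_ratio k hx
      rwa [hx1] at this
    calc (ell k x - ell k (t:ℝ)) * Lam k x
        ≤ (1 / Lam k (t:ℝ)) * ((2 * ∏ j ∈ Finset.Icc 1 k, ell j 2) * Lam k (t:ℝ)) :=
          mul_le_mul hd1 h5 (le_trans zero_le_one (Lam_one_le k (by linarith)))
            (by positivity)
      _ = 2 * ∏ j ∈ Finset.Icc 1 k, ell j 2 := by field_simp

end Main

/-- The function g(o) = 0, g(v) = ℓ_m(|v|) for v ≠ o belongs to L^(m) for every m,
with ‖g‖₀ = 1 and, for m ≥ 1, ‖g‖_m ≤ 2·∏_{j=1}^m ℓ_j(2). -/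
theorem ell_test_function {V : Type*} [DecidableEq V] (o : V) (parent : V → V) (depth : V → ℕ)
    (hpar : parent o = o) (hdepth0 : depth o = 0)
    (hdepth : ∀ v, v ≠ o → depth v = depth (parent v) + 1)
    (hchild : ∀ v, ∃ w, w ≠ o ∧ parent w = v)
    (m : ℕ) :
    BddAbove (lipSet o parent depth m
      (fun v => if v = o then 0 else ell m (depth v))) ∧
    lipNorm o parent depth 0 (fun v => if v = o then 0 else ell 0 (depth v)) = 1 ∧
    (1 ≤ m → lipNorm o parent depth m (fun v => if v = o then 0 else ell m (depth v)) ≤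
      2 * ∏ j ∈ Finset.Icc 1 m, ell j 2) := by
  refine ⟨?_, ?_, ?_⟩
  · refine ⟨2 * ∏ j ∈ Finset.Icc 1 m, ell j 2, ?_⟩
    rintro r ⟨v, hv, rfl⟩
    exact key_bound o parent depth hdepth0 hdepth m v hv
  · have hset : lipSet o parent depth 0
        (fun v => if v = o then 0 else (ell 0 (depth v) : ℂ)) = {1} := by
      ext r
      simp only [lipSet, Set.mem_setOf_eq, Set.mem_singleton_iff]
      constructor
      · rintro ⟨v, hv, rfl⟩
        have hdv := hdepth v hv
        have hL : Lam 0 ((depth v : ℝ)) = 1 := by simp [Lam]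
        rw [hL, mul_one]
        simp only [Der, if_neg hv]
        by_cases hp : parent v = o
        · have hd1 : depth v = 1 := by rw [hdv, hp, hdepth0]
          rw [hp, if_pos rfl, hd1]
          simp [ell_zero]
        · rw [if_neg hp, hdv]
          push_cast [ell_zero]
          ring_nf
          simp
      · rintro rfl
        obtain ⟨w, hw, hpw⟩ := hchild o
        refine ⟨w, hw, ?_⟩
        have hd1 : depth w = 1 := by rw [hdepth w hw, hpw, hdepth0]
        simp [Der, if_neg hw, hpw, hd1, ell_zero, Lam]
    rw [lipNorm, hset, csSup_singleton]
    simp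
  · intro hm
    rw [lipNorm]
    have h0 : ‖(if o = o then 0 else ((ell m (depth o) : ℝ) : ℂ))‖ = 0 := by simp
    rw [h0, zero_add]
    refine Real.sSup_le ?_ (le_trans zero_le_one (one_le_K m))
    rintro r ⟨v, hv, rfl⟩
    exact key_bound o parent depth hdepth0 hdepth m v hv
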